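/- Let $F$ be a number field of degree $n$, $C \ge 1$, and let $I$ be a fractional ideal with $1 \in I$ such that $N(I^{-1}) \le \partial_F$ (with $\partial_F = (2/\pi)^{r_2}\sqrt{|\Delta_F|}$). Define inductively $J_1 = I$ and $J_{i+1} = f_i^{-1} J_i$ where $f_i$ is a shortest nonzero vector of the lattice $N(J_i)^{-1/n}J_i$, as long as $\|f_i\| < \sqrt{n}/C$. Then this process stops after at most $\frac{\log \partial_F}{n \log C}$ steps (for $C > 1$); i.e., if $\|f_j\| < \sqrt{n}/C$ for all $j = 1,\dots,k$, then $k < \frac{\log \partial_F}{n\log C}$. -/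

import Mathlib

open NumberField FractionalIdeal Finset
open scoped nonZeroDivisors

noncomputable def enorm (F : Type*) [Field F] [NumberField F] (g : F) : ℝ :=
  Real.sqrt (∑ w : InfinitePlace F, w.mult * (w g) ^ 2)

noncomputable def scaleFactor {F : Type*} [Field F] [NumberField F]
    (I : FractionalIdeal (𝓞 F)⁰ F) : ℝ :=
  (FractionalIdeal.absNorm I : ℝ) ^ (-(1 : ℝ) / (Module.finrank ℚ F))

def PrimitiveOne {F : Type*} [Field F] [NumberField F]
    (I : FractionalIdeal (𝓞 F)⁰ F) : Prop :=
  (1 : F) ∈ I ∧ ∀ d : ℕ, 2 ≤ d → ((d : F)⁻¹ ∉ I)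

def StronglyReduced {F : Type*} [Field F] [NumberField F] (C : ℝ)
    (I : FractionalIdeal (𝓞 F)⁰ F) : Prop :=
  PrimitiveOne I ∧
    ∀ g ∈ I, g ≠ 0 → enorm F 1 ≤ C * (scaleFactor I * enorm F g)

noncomputable def parF (F : Type*) [Field F] [NumberField F] : ℝ :=
  (2 / Real.pi) ^ (InfinitePlace.nrComplexPlaces F) * Real.sqrt |(discr F : ℝ)|



lemma amgm_aux {F : Type*} [Field F] [NumberField F] (x : F) :
    ((|Algebra.norm ℚ x| : ℚ) : ℝ) ^ ((2:ℝ)/(Module.finrank ℚ F)) ≤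
      (∑ w : InfinitePlace F, w.mult * (w x)^2) / (Module.finrank ℚ F) := by
  have hn : (0:ℝ) < (Module.finrank ℚ F : ℝ) := by
    exact_mod_cast Module.finrank_pos
  set n : ℝ := (Module.finrank ℚ F : ℝ) with hndef
  have h := Real.geom_mean_le_arith_mean_weighted Finset.univ
    (fun w : InfinitePlace F => (w.mult : ℝ)/n) (fun w : InfinitePlace F => (w x)^2)
    (fun i _ => by positivity) ?_ (fun i _ => by positivity)
  · calc ((|Algebra.norm ℚ x| : ℚ) : ℝ) ^ ((2:ℝ)/n)
        = ∏ w : InfinitePlace F, ((w x)^2 : ℝ) ^ ((w.mult : ℝ)/n) := by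
          rw [← InfinitePlace.prod_eq_abs_norm x]
          push_cast
          rw [← Real.finset_prod_rpow _ _ (fun w _ => by positivity)]
          refine Finset.prod_congr rfl fun w _ => ?_
          rw [← Real.rpow_natCast (w x) 2, ← Real.rpow_natCast (w x) w.mult,
            ← Real.rpow_mul (apply_nonneg w x),
            ← Real.rpow_mul (apply_nonneg w x)]
          ring_nf
      _ ≤ ∑ w : InfinitePlace F, ((w.mult : ℝ)/n) * (w x)^2 := h
      _ = (∑ w : InfinitePlace F, w.mult * (w x)^2) / n := by
          simp_rw [div_mul_eq_mul_div, ← Finset.sum_div]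
  · rw [← Finset.sum_div]
    rw [show ∑ w : InfinitePlace F, (w.mult : ℝ) = n by
      rw [hndef, ← InfinitePlace.sum_mult_eq (K := F)]; push_cast; rfl]
    exact div_self hn.ne'


lemma one_le_absNorm_inv {F : Type*} [Field F] [NumberField F]
    {I : FractionalIdeal (𝓞 F)⁰ F} (h1 : (1 : F) ∈ I) :
    I ≠ 0 ∧ 1 ≤ ((absNorm I⁻¹ : ℚ) : ℝ) := by
  have hI0 : I ≠ 0 := by
    rintro rfl
    exact one_ne_zero ((FractionalIdeal.mem_zero_iff _).mp h1)
  refine ⟨hI0, ?_⟩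
  have hle : I⁻¹ ≤ 1 := by
    intro x hx
    have := (FractionalIdeal.mem_inv_iff hI0).mp hx 1 h1
    rw [mul_one] at this
    show x ∈ (1 : FractionalIdeal (𝓞 F)⁰ F)
    exact this
  obtain ⟨J₀, hJ₀⟩ := FractionalIdeal.le_one_iff_exists_coeIdeal.mp hle
  have hne : absNorm I⁻¹ ≠ 0 := by
    rw [ne_eq, FractionalIdeal.absNorm_eq_zero_iff]
    exact inv_ne_zero hI0
  rw [← hJ₀, FractionalIdeal.coeIdeal_absNorm] at hne ⊢
  have : 1 ≤ Ideal.absNorm J₀ := by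
    rcases Nat.eq_zero_or_pos (Ideal.absNorm J₀) with h | h
    · simp [h] at hne
    · exact h
  exact_mod_cast this

lemma step_ineq {F : Type*} [Field F] [NumberField F] {C : ℝ} (hC : 1 < C)
    {I I' : FractionalIdeal (𝓞 F)⁰ F} {x : F} (h1 : (1 : F) ∈ I) (hx0 : x ≠ 0)
    (hlt : scaleFactor I * enorm F x < Real.sqrt (Module.finrank ℚ F) / C)
    (hI' : I' = spanSingleton (𝓞 F)⁰ x⁻¹ * I) :
    ((absNorm I'⁻¹ : ℚ) : ℝ) * C ^ (Module.finrank ℚ F) < ((absNorm I⁻¹ : ℚ) : ℝ) := by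
  obtain ⟨hI0, hNinv⟩ := one_le_absNorm_inv h1
  have hC0 : (0:ℝ) < C := lt_trans one_pos hC
  have hn : (0:ℝ) < (Module.finrank ℚ F : ℝ) := by exact_mod_cast Module.finrank_pos
  set n : ℝ := (Module.finrank ℚ F : ℝ) with hndef
  set Ni : ℝ := ((absNorm I : ℚ) : ℝ) with hNidef
  have hNi : 0 < Ni := by
    have h0 : absNorm I ≠ 0 := by
      rw [ne_eq, FractionalIdeal.absNorm_eq_zero_iff]; exact hI0
    have h1' : 0 ≤ absNorm I := FractionalIdeal.absNorm_nonneg I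
    rw [hNidef]
    exact_mod_cast lt_of_le_of_ne h1' (Ne.symm h0)
  set e : ℝ := enorm F x with hedef
  have he : 0 ≤ e := Real.sqrt_nonneg _
  -- step (a): e < Ni^(1/n) * (√n / C)
  have ha : e < Ni ^ ((1:ℝ)/n) * (Real.sqrt n / C) := by
    have hp : (0:ℝ) < Ni ^ ((1:ℝ)/n) := Real.rpow_pos_of_pos hNi _
    have hsf : scaleFactor I = Ni ^ (-(1:ℝ)/n) := rfl
    rw [hsf] at hlt
    have := mul_lt_mul_of_pos_left hlt hp
    rwa [← mul_assoc, ← Real.rpow_add hNi, show (1:ℝ)/n + -(1)/n = 0 by ring,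
      Real.rpow_zero, one_mul] at this
  -- step (b): e^2 < Ni^(2/n) * n / C^2
  have hb : e^2 < Ni ^ ((2:ℝ)/n) * n / C^2 := by
    have h2 : e^2 < (Ni ^ ((1:ℝ)/n) * (Real.sqrt n / C))^2 := by
      exact pow_lt_pow_left₀ ha he two_ne_zero
    calc e^2 < (Ni ^ ((1:ℝ)/n) * (Real.sqrt n / C))^2 := h2
      _ = Ni ^ ((2:ℝ)/n) * n / C^2 := by
          rw [mul_pow, div_pow, Real.sq_sqrt hn.le,
            ← Real.rpow_natCast (Ni ^ ((1:ℝ)/n)) 2, ← Real.rpow_mul hNi.le]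
          push_cast
          ring_nf
  -- step (c): |N x| < Ni / C^n
  set M : ℝ := ((|Algebra.norm ℚ x| : ℚ) : ℝ) with hMdef
  have hM0 : 0 ≤ M := by positivity
  have hsq : e^2 = ∑ w : InfinitePlace F, (w.mult : ℝ) * (w x)^2 := by
    rw [hedef, show enorm F x = Real.sqrt (∑ w : InfinitePlace F, w.mult * (w x) ^ 2) from rfl, Real.sq_sqrt (by positivity)]
  have hb' : e^2/n < Ni ^ ((2:ℝ)/n) / C^2 := by
    rw [div_lt_div_iff₀ hn (by positivity : (0:ℝ) < C^2)]
    calc e^2 * C^2 < (Ni ^ ((2:ℝ)/n) * n / C^2) * C^2 :=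
          mul_lt_mul_of_pos_right hb (by positivity)
      _ = Ni ^ ((2:ℝ)/n) * n := div_mul_cancel₀ _ (by positivity)
  have hc1 : M ^ ((2:ℝ)/n) < Ni ^ ((2:ℝ)/n) / C^2 := by
    refine lt_of_le_of_lt ?_ hb'
    rw [hsq]
    exact amgm_aux x
  have hc : M < Ni / C ^ (Module.finrank ℚ F) := by
    have hone : (2:ℝ)/n * (n/2) = 1 := by field_simp
    have hME : M = (M ^ ((2:ℝ)/n)) ^ (n/(2:ℝ)) := by
      rw [← Real.rpow_mul hM0, hone, Real.rpow_one]
    have h2 := Real.rpow_lt_rpow (Real.rpow_nonneg hM0 _) hc1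
      (by positivity : (0:ℝ) < n/2)
    rw [← hME] at h2
    rwa [Real.div_rpow (by positivity) (by positivity), ← Real.rpow_mul hNi.le, hone,
      Real.rpow_one, ← Real.rpow_natCast C 2, ← Real.rpow_mul hC0.le,
      show (2:ℕ) * (n/2) = n by push_cast; ring, hndef, Real.rpow_natCast] at h2
  -- step (d): conclude
  have hd : ((absNorm I'⁻¹ : ℚ) : ℝ) = M * Ni⁻¹ := by
    rw [hI', mul_inv, spanSingleton_inv, inv_inv, _root_.map_mul,
      FractionalIdeal.absNorm_span_singleton, map_inv₀]
    rw [hMdef, hNidef]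
    push_cast
    ring
  rw [hd]
  calc M * Ni⁻¹ * C ^ (Module.finrank ℚ F)
      < (Ni / C ^ (Module.finrank ℚ F)) * Ni⁻¹ * C ^ (Module.finrank ℚ F) := by
        have : (0:ℝ) < Ni⁻¹ * C ^ (Module.finrank ℚ F) := by positivity
        calc M * Ni⁻¹ * C ^ (Module.finrank ℚ F)
            = M * (Ni⁻¹ * C ^ (Module.finrank ℚ F)) := by ring
          _ < (Ni / C ^ (Module.finrank ℚ F)) * (Ni⁻¹ * C ^ (Module.finrank ℚ F)) :=
              mul_lt_mul_of_pos_right hc this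
          _ = (Ni / C ^ (Module.finrank ℚ F)) * Ni⁻¹ * C ^ (Module.finrank ℚ F) := by ring
    _ = 1 := by field_simp
    _ ≤ ((absNorm I⁻¹ : ℚ) : ℝ) := hNinv

theorem reduction_steps_bounded {F : Type*} [Field F] [NumberField F]
    (C : ℝ) (hC : 1 < C) (k : ℕ) (hk : 1 ≤ k)
    (J : ℕ → FractionalIdeal (𝓞 F)⁰ F) (f : ℕ → F)
    (hone : (1 : F) ∈ J 1) (hN : (absNorm (J 1)⁻¹ : ℝ) ≤ parF F)
    (hstep : ∀ i, 1 ≤ i → i ≤ k →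
      f i ∈ J i ∧ f i ≠ 0 ∧
      scaleFactor (J i) * enorm F (f i) < Real.sqrt (Module.finrank ℚ F) / C ∧
      (∀ g ∈ J i, g ≠ 0 → enorm F (f i) ≤ enorm F g) ∧
      J (i + 1) = spanSingleton (𝓞 F)⁰ (f i)⁻¹ * J i) :
    (k : ℝ) < Real.log (parF F) / ((Module.finrank ℚ F) * Real.log C) := by
  set n : ℕ := Module.finrank ℚ F with hndef
  have hC0 : (0:ℝ) < C := lt_trans one_pos hC
  have hmem : ∀ i, 1 ≤ i → i ≤ k + 1 → (1 : F) ∈ J i := by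
    intro i hi
    induction i, hi using Nat.le_induction with
    | base => intro _; exact hone
    | succ m hm ih =>
      intro hm2
      have hmk : m ≤ k := by omega
      obtain ⟨hf, hf0, _, _, hJ⟩ := hstep m hm hmk
      rw [hJ]
      have h := FractionalIdeal.mul_mem_mul
        (FractionalIdeal.mem_spanSingleton_self (𝓞 F)⁰ (f m)⁻¹) hf
      rwa [inv_mul_cancel₀ hf0] at h
  have hchain : ∀ i, 1 ≤ i → i ≤ k →
      ((absNorm (J (i+1))⁻¹ : ℚ) : ℝ) * (C ^ n) ^ i < ((absNorm (J 1)⁻¹ : ℚ) : ℝ) := by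
    intro i hi
    induction i, hi using Nat.le_induction with
    | base =>
      intro h1k
      obtain ⟨hf, hf0, hlt, _, hJ⟩ := hstep 1 le_rfl h1k
      simpa [pow_one] using step_ineq hC hone hf0 hlt hJ
    | succ m hm ih =>
      intro hmk
      have ihm := ih (by omega)
      obtain ⟨hf, hf0, hlt, _, hJ⟩ := hstep (m+1) (by omega) hmk
      have hmem' : (1 : F) ∈ J (m+1) := hmem (m+1) (by omega) (by omega)
      have hs := step_ineq hC hmem' hf0 hlt hJ
      calc ((absNorm (J (m+2))⁻¹ : ℚ) : ℝ) * (C ^ n) ^ (m+1)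
          = (((absNorm (J (m+2))⁻¹ : ℚ) : ℝ) * C ^ n) * (C ^ n) ^ m := by ring
        _ < ((absNorm (J (m+1))⁻¹ : ℚ) : ℝ) * (C ^ n) ^ m :=
            mul_lt_mul_of_pos_right hs (by positivity)
        _ < ((absNorm (J 1)⁻¹ : ℚ) : ℝ) := ihm
  have hfin := hchain k hk le_rfl
  have h1le : 1 ≤ ((absNorm (J (k+1))⁻¹ : ℚ) : ℝ) :=
    (one_le_absNorm_inv (hmem (k+1) (by omega) le_rfl)).2
  have hCk : (C ^ n) ^ k < parF F := by
    calc (C ^ n) ^ k = 1 * (C ^ n) ^ k := (one_mul _).symm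
      _ ≤ ((absNorm (J (k+1))⁻¹ : ℚ) : ℝ) * (C ^ n) ^ k :=
          mul_le_mul_of_nonneg_right h1le (by positivity)
      _ < ((absNorm (J 1)⁻¹ : ℚ) : ℝ) := hfin
      _ ≤ parF F := hN
  have hlog : ((n * k : ℕ) : ℝ) * Real.log C < Real.log (parF F) := by
    have h0 : (0:ℝ) < (C ^ n) ^ k := by positivity
    have h := Real.log_lt_log h0 hCk
    rwa [← pow_mul, Real.log_pow] at h
  have hn0 : (0:ℝ) < (n : ℝ) := by exact_mod_cast Module.finrank_pos
  rw [lt_div_iff₀ (mul_pos hn0 (Real.log_pos hC))]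
  calc (k : ℝ) * ((n : ℝ) * Real.log C) = ((n * k : ℕ) : ℝ) * Real.log C := by
        push_cast; ring
    _ < Real.log (parF F) := hlog
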